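/- Let M be a matroid, B a base of M, e₀, …, e_n pairwise distinct elements of E \ B, and F ⊆ B with |F| ≤ n. Then there exists i* ≤ n and a circuit C of M with e_{i*} ∈ C and C ⊆ (⋃_{i*≤i≤n} C_M(e_i, B)) \ F. -/

import Mathlib

open Set

variable {α : Type*}

/-- `C` is a circuit of the matroid `M`: a minimal dependent subset of the ground set. -/
def MCircuit (M : Matroid α) (C : Set α) : Prop :=
  C ⊆ M.E ∧ ¬ M.Indep C ∧ ∀ D, D ⊂ C → M.Indep D

/-- `C` is the fundamental circuit of `e` with respect to `B`. -/
def FundCircuit (M : Matroid α) (e : α) (B C : Set α) : Prop :=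
  MCircuit M C ∧ e ∈ C ∧ C ⊆ insert e B

section Aux

variable {M : Matroid α} {B C I L : Set α} {x e f : α}

lemma MCircuit.indep_diff (hC : MCircuit M C) (hx : x ∈ C) : M.Indep (C \ {x}) :=
  hC.2.2 _ (sdiff_singleton_ssubset.mpr hx)

lemma MCircuit.mem_closure_diff (hC : MCircuit M C) (hx : x ∈ C) :
    x ∈ M.closure (C \ {x}) := by
  by_contra h
  have hi : M.Indep (C \ {x}) := hC.indep_diff hx
  have hxE : x ∈ M.E := hC.1 hx
  have hins : M.Indep (insert x (C \ {x})) := by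
    rw [hi.insert_indep_iff]
    exact Or.inl ⟨hxE, h⟩
  rw [insert_diff_singleton, insert_eq_of_mem hx] at hins
  exact hC.2.1 hins

/-- Minimality of the fundamental circuit: if `e ∈ cl L` for `L ⊆ I`, then the
circuit of `e` over `I` is contained in `insert e L`. -/
lemma fundCircuit_min (hI : M.Indep I) (hC : MCircuit M C) (heC : e ∈ C)
    (hCI : C ⊆ insert e I) (heI : e ∉ I) (hL : L ⊆ I) (heL : e ∈ M.closure L) :
    C \ {e} ⊆ L := by
  set J := C \ {e} with hJ
  have hJI : J ⊆ I := by
    rintro x ⟨hxC, hxe⟩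
    rcases hCI hxC with rfl | h
    · exact absurd rfl hxe
    · exact h
  have hJind : M.Indep J := hI.subset hJI
  have heJ : e ∈ M.closure J := hC.mem_closure_diff heC
  have hUnion : M.Indep (J ∪ L) := hI.subset (union_subset hJI hL)
  have hmem : e ∈ M.closure (J ∩ L) := by
    rw [hUnion.closure_inter_eq_inter_closure]
    exact ⟨heJ, heL⟩
  by_contra hsub
  obtain ⟨x, hxJ, hxL⟩ : ∃ x, x ∈ J ∧ x ∉ L := not_subset.mp hsub
  have hss : insert e (J ∩ L) ⊂ C := by
    constructor
    · refine insert_subset heC ?_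
      exact fun y hy => hy.1.1
    · intro hCsub
      rcases hCsub hxJ.1 with h | h
      · exact hxJ.2 h
      · exact hxL h.2
  have hind := hC.2.2 _ hss
  have hdep : M.Dep (insert e (J ∩ L)) := by
    refine (hJind.subset inter_subset_left).insert_dep_iff.mpr ⟨hmem, ?_⟩
    exact fun h => heI (hJI h.1)
  exact hdep.not_indep hind

/-- Existence of the fundamental circuit. -/
lemma exists_fundCircuit (hI : M.Indep I) (heI : e ∉ I) (hecl : e ∈ M.closure I) :
    ∃ C, FundCircuit M e I C := by
  set Js : Set (Set α) := {J | J ⊆ I ∧ e ∈ M.closure J} with hJs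
  have hIJs : I ∈ Js := ⟨Subset.rfl, hecl⟩
  have hne : Js.Nonempty := ⟨I, hIJs⟩
  set J0 := ⋂₀ Js with hJ0
  have hJ0I : J0 ⊆ I := sInter_subset_of_mem hIJs
  have hecl0 : e ∈ M.closure J0 := by
    rw [hJ0, hI.closure_sInter_eq_biInter_closure_of_forall_subset hne (fun J hJ => hJ.1)]
    exact mem_iInter₂.mpr (fun J hJ => hJ.2)
  have heE : e ∈ M.E := M.mem_ground_of_mem_closure hecl
  have heJ0 : e ∉ J0 := fun h => heI (hJ0I h)
  refine ⟨insert e J0, ⟨?_, ?_, ?_⟩, mem_insert _ _, insert_subset_insert hJ0I⟩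
  · exact insert_subset heE (hJ0I.trans hI.subset_ground)
  · exact ((hI.subset hJ0I).insert_dep_iff.mpr ⟨hecl0, heJ0⟩).not_indep
  · intro D hD
    by_cases heD : e ∈ D
    · have hDJ0 : D \ {e} ⊆ J0 := by
        rintro x ⟨hxD, hxe⟩
        rcases hD.subset hxD with rfl | h
        · exact absurd rfl hxe
        · exact h
      have hDne : ¬ J0 ⊆ D \ {e} := by
        intro hsub
        refine hD.2 ?_
        intro y hy
        rcases hy with rfl | hyJ0
        · exact heD
        · exact (hsub hyJ0).1
      have hne' : e ∉ M.closure (D \ {e}) := by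
        intro hcl
        exact hDne (sInter_subset_of_mem ⟨hDJ0.trans hJ0I, hcl⟩)
      have hins : M.Indep (insert e (D \ {e})) := by
        rw [(hI.subset (hDJ0.trans hJ0I)).insert_indep_iff]
        exact Or.inl ⟨heE, hne'⟩
      rwa [insert_diff_singleton, insert_eq_of_mem heD] at hins
    · refine hI.subset ?_
      intro x hx
      rcases hD.subset hx with rfl | h
      · exact absurd hx heD
      · exact hJ0I h

/-- Base exchange along a fundamental circuit. -/
lemma exchange_base (hB : M.IsBase B) (hC : MCircuit M C) (he : e ∈ M.E \ B)
    (heC : e ∈ C) (hCB : C ⊆ insert e B) (hf : f ∈ C) (hfB : f ∈ B) :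
    M.IsBase (insert e (B \ {f})) := by
  have hind : M.Indep (B \ {f}) := hB.indep.subset diff_subset
  have hfe : f ≠ e := fun h => he.2 (h ▸ hfB)
  have hecl : e ∉ M.closure (B \ {f}) := by
    intro hcl
    have hsub := fundCircuit_min hB.indep hC heC hCB he.2 diff_subset hcl
    exact (hsub ⟨hf, hfe⟩).2 rfl
  have hind' : M.Indep (insert e (B \ {f})) := by
    rw [hind.insert_indep_iff]
    exact Or.inl ⟨he.1, hecl⟩
  apply hind'.isBase_of_ground_subset_closure
  have hfcl : f ∈ M.closure (insert e (B \ {f})) := by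
    have h1 : f ∈ M.closure (C \ {f}) := hC.mem_closure_diff hf
    refine M.closure_subset_closure ?_ h1
    rintro x ⟨hxC, hxf⟩
    rcases hCB hxC with rfl | h
    · exact mem_insert _ _
    · exact mem_insert_of_mem _ ⟨h, hxf⟩
  have hsub : M.closure B ⊆ M.closure (insert e (B \ {f})) := by
    rw [← Matroid.closure_insert_eq_of_mem_closure hfcl]
    refine M.closure_subset_closure ?_
    intro x hx
    by_cases hxf : x = f
    · exact hxf ▸ mem_insert _ _
    · exact mem_insert_of_mem _ (mem_insert_of_mem _ ⟨hx, hxf⟩)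
  rw [hB.closure_eq] at hsub
  exact hsub

lemma key_aux : ∀ (n : ℕ) (M : Matroid α) (B : Set α), M.IsBase B → ∀ (e : Fin (n + 1) → α),
    Function.Injective e → (∀ i, e i ∈ M.E \ B) → ∀ (Cf : Fin (n + 1) → Set α),
    (∀ i, FundCircuit M (e i) B (Cf i)) → ∀ (F : Set α), F ⊆ B → F.Finite → F.ncard ≤ n →
    ∃ i' : Fin (n + 1), ∃ C, MCircuit M C ∧ e i' ∈ C ∧
      C ⊆ (⋃ i ∈ {i : Fin (n + 1) | i' ≤ i}, Cf i) \ F := by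
  intro n
  induction n with
  | zero =>
    intro M B hB e hinj he Cf hCf F hF hFfin hFcard
    have hFe : F = ∅ := by
      rwa [Nat.le_zero, Set.ncard_eq_zero hFfin] at hFcard
    refine ⟨0, Cf 0, (hCf 0).1, (hCf 0).2.1, ?_⟩
    rw [hFe, diff_empty]
    exact subset_biUnion_of_mem (show (0 : Fin 1) ∈ {i : Fin 1 | 0 ≤ i} from Fin.zero_le _)
  | succ n IH =>
    intro M B hB e hinj he Cf hCf F hF hFfin hFcard
    set lst : Fin (n + 2) := Fin.last (n + 1) with hlst
    by_cases hFC : (Cf lst ∩ F).Nonempty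
    · obtain ⟨f, hfC, hfF⟩ := hFC
      have hfB : f ∈ B := hF hfF
      set B' := insert (e lst) (B \ {f}) with hB'def
      have hB' : M.IsBase B' :=
        exchange_base hB (hCf lst).1 (he lst) (hCf lst).2.1 (hCf lst).2.2 hfC hfB
      set e' : Fin (n + 1) → α := fun i => e i.castSucc with he'def
      have hinj' : Function.Injective e' := fun a b h =>
        Fin.castSucc_injective _ (hinj h)
      have hcast_ne : ∀ i : Fin (n + 1), e i.castSucc ≠ e lst := by
        intro i h
        exact (Fin.castSucc_lt_last i).ne (hinj h)
      have he' : ∀ i, e' i ∈ M.E \ B' := by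
        intro i
        refine ⟨(he _).1, ?_⟩
        rintro (h | h)
        · exact hcast_ne i h
        · exact (he _).2 h.1
      have hex : ∀ i : Fin (n + 1), ∃ C, FundCircuit M (e' i) B' C := by
        intro i
        refine exists_fundCircuit hB'.indep (he' i).2 ?_
        rw [hB'.closure_eq]
        exact (he' i).1
      choose Cf' hCf' using hex
      have hfB' : f ∉ B' := by
        rintro (h | h)
        · exact (he lst).2 (h ▸ hfB)
        · exact h.2 rfl
      have hF' : F \ {f} ⊆ B' := fun x hx => mem_insert_of_mem _ ⟨hF hx.1, hx.2⟩
      have hcard' : (F \ {f}).ncard ≤ n := by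
        have hlt : (F \ {f}).ncard < F.ncard := ncard_diff_singleton_lt_of_mem hfF hFfin
        omega
      obtain ⟨i0, C, hCcirc, heC, hCsub⟩ :=
        IH M B' hB' e' hinj' he' Cf' hCf' (F \ {f}) hF' hFfin.diff hcard'
      -- the key inclusion
      have hkey : ∀ i : Fin (n + 1), Cf' i ⊆ Cf i.castSucc ∪ Cf lst := by
        intro i
        set L : Set α := insert (e lst)
          (((Cf i.castSucc \ {e i.castSucc}) ∪ (Cf lst \ {e lst})) \ {f}) with hLdef
        have hLB' : L ⊆ B' := by
          rintro x (rfl | ⟨hx, hxf⟩)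
          · exact mem_insert _ _
          · refine mem_insert_of_mem _ ⟨?_, hxf⟩
            rcases hx with ⟨hxC, hxe⟩ | ⟨hxC, hxe⟩
            · rcases (hCf i.castSucc).2.2 hxC with rfl | h
              · exact absurd rfl hxe
              · exact h
            · rcases (hCf lst).2.2 hxC with rfl | h
              · exact absurd rfl hxe
              · exact h
        have hfL : f ∈ M.closure L := by
          have h1 : f ∈ M.closure (Cf lst \ {f}) := (hCf lst).1.mem_closure_diff hfC
          refine M.closure_subset_closure ?_ h1
          rintro x ⟨hxC, hxf⟩
          by_cases hxe : x = e lst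
          · exact hxe ▸ mem_insert _ _
          · exact mem_insert_of_mem _ ⟨Or.inr ⟨hxC, hxe⟩, hxf⟩
        have heicl : e' i ∈ M.closure L := by
          have h1 : e' i ∈ M.closure (Cf i.castSucc \ {e i.castSucc}) :=
            (hCf i.castSucc).1.mem_closure_diff (hCf i.castSucc).2.1
          have h2 : Cf i.castSucc \ {e i.castSucc} ⊆ insert f L := by
            rintro x ⟨hxC, hxe⟩
            by_cases hxf : x = f
            · exact hxf ▸ mem_insert _ _
            · exact mem_insert_of_mem _ (mem_insert_of_mem _ ⟨Or.inl ⟨hxC, hxe⟩, hxf⟩)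
          have h3 : M.closure (insert f L) = M.closure L :=
            Matroid.closure_insert_eq_of_mem_closure hfL
          exact h3 ▸ (M.closure_subset_closure h2 h1)
        have hmin : Cf' i \ {e' i} ⊆ L :=
          fundCircuit_min hB'.indep (hCf' i).1 (hCf' i).2.1 (hCf' i).2.2
            (he' i).2 hLB' heicl
        intro x hx
        by_cases hxe : x = e' i
        · exact Or.inl (hxe ▸ (hCf i.castSucc).2.1)
        · rcases hmin ⟨hx, hxe⟩ with rfl | ⟨hy, _⟩
          · exact Or.inr (hCf lst).2.1
          · rcases hy with ⟨h, _⟩ | ⟨h, _⟩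
            · exact Or.inl h
            · exact Or.inr h
      have hfC' : ∀ i : Fin (n + 1), f ∉ Cf' i := by
        intro i hfi
        rcases (hCf' i).2.2 hfi with h | h
        · exact (he i.castSucc).2 (show e' i ∈ B from h ▸ hfB)
        · exact hfB' h
      refine ⟨i0.castSucc, C, hCcirc, heC, ?_⟩
      intro x hx
      obtain ⟨hxU, hxF'⟩ := hCsub hx
      obtain ⟨j, hj, hxj⟩ := mem_iUnion₂.mp hxU
      have hxf : x ≠ f := fun h => hfC' j (h ▸ hxj)
      refine ⟨?_, fun hxF => hxF' ⟨hxF, hxf⟩⟩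
      rcases hkey j hxj with h | h
      · exact mem_biUnion (show i0.castSucc ≤ j.castSucc from
          (Fin.castSucc_le_castSucc_iff).mpr hj) h
      · exact mem_biUnion (show i0.castSucc ≤ lst from Fin.le_last _) h
    · refine ⟨lst, Cf lst, (hCf lst).1, (hCf lst).2.1, ?_⟩
      intro x hx
      exact ⟨mem_biUnion (show lst ∈ {i : Fin (n + 2) | lst ≤ i} by simp) hx,
        fun hxF => hFC ⟨x, hx, hxF⟩⟩

end Aux

/-- For pairwise distinct `e₀,…,e_n ∈ E \ B` and `F ⊆ B` with `|F| ≤ n`, there are `i* ≤ n`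
and a circuit `C` with `e_{i*} ∈ C ⊆ (⋃_{i*≤i≤n} C_M(e_i,B)) \ F`. -/
theorem stmt6 (M : Matroid α) (B : Set α) (hB : M.IsBase B) (n : ℕ)
    (e : Fin (n + 1) → α) (hinj : Function.Injective e) (he : ∀ i, e i ∈ M.E \ B)
    (Cf : Fin (n + 1) → Set α) (hCf : ∀ i, FundCircuit M (e i) B (Cf i))
    (F : Set α) (hF : F ⊆ B) (hFfin : F.Finite) (hFcard : F.ncard ≤ n) :
    ∃ i' : Fin (n + 1), ∃ C, MCircuit M C ∧ e i' ∈ C ∧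
      C ⊆ (⋃ i ∈ {i : Fin (n + 1) | i' ≤ i}, Cf i) \ F :=
  key_aux n M B hB e hinj he Cf hCf F hF hFfin hFcard
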